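/- Let k ≥ 1, a ≥ 1, b ≥ 0 and c ≥ 1 be integers, and let f be a multiplicative arithmetic function with rational values such that f(m) ≠ 0 for every positive integer m. Then the arithmetic function g_{k,f} is periodic and c·L_k is a period of g_{k,f}, i.e., g_{k,f}(n + c·L_k) = g_{k,f}(n) for every positive integer n. -/

import Mathlib

/-- `L k = lcm (1, 2, …, k)`. -/
def Lk (k : ℕ) : ℕ := (Finset.Icc 1 k).lcm id

lemma lcm_ne_zero'' {ι : Type*} (s : Finset ι) (g : ι → ℕ) (h : ∀ i ∈ s, g i ≠ 0) :
    s.lcm g ≠ 0 := by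
  simp only [Ne, Finset.lcm_eq_zero_iff, Set.mem_image, Finset.mem_coe]
  rintro ⟨i, hi, h0⟩
  exact h i hi h0

lemma factorization_finset_lcm {ι : Type*} [DecidableEq ι] (s : Finset ι) (g : ι → ℕ)
    (h : ∀ i ∈ s, g i ≠ 0) (p : ℕ) :
    (s.lcm g).factorization p = s.sup fun i => (g i).factorization p := by
  induction s using Finset.induction with
  | empty => simp
  | @insert a s ha ih =>
    rw [Finset.lcm_insert, Finset.sup_insert]
    have h1 : g a ≠ 0 := h a (Finset.mem_insert_self a s)
    have h2 : s.lcm g ≠ 0 := lcm_ne_zero'' _ _ fun i hi => h i (Finset.mem_insert_of_mem hi)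
    have h3 : GCDMonoid.lcm (g a) (s.lcm g) = Nat.lcm (g a) (s.lcm g) := rfl
    rw [h3, Nat.factorization_lcm h1 h2]
    rw [Finsupp.sup_apply]
    rw [ih fun i hi => h i (Finset.mem_insert_of_mem hi)]

lemma key_prime (k a c T : ℕ)
    (hT : ∀ d : ℕ, 1 ≤ d → d ≤ k → a * c * d ∣ a * T)
    (f : ℕ → ℚ) (hf1 : f 1 = 1) (hfne : ∀ m : ℕ, 0 < m → f m ≠ 0)
    (p : ℕ) (hp : p.Prime)
    (x x' : ℕ → ℕ) (hx : ∀ i, 0 < x i) (hx' : ∀ i, 0 < x' i)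
    (hdiff : ∀ i, x' i = x i + a * T)
    (hsub : ∀ i j : ℕ, i < j → j ≤ k → x j = x i + a * c * (j - i)) :
    (∏ i ∈ Finset.range (k + 1), f (p ^ (x' i).factorization p)) /
        f (p ^ ((Finset.range (k + 1)).lcm x').factorization p) =
    (∏ i ∈ Finset.range (k + 1), f (p ^ (x i).factorization p)) /
        f (p ^ ((Finset.range (k + 1)).lcm x).factorization p) := by
  classical
  have hsub' : ∀ i j : ℕ, i < j → j ≤ k → x' j = x' i + a * c * (j - i) := by
    intro i j hij hjk
    rw [hdiff, hdiff, hsub i j hij hjk]; ring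
  set u : ℕ → ℚ := fun r => f (p ^ (r + 1)) / f (p ^ r) with hu
  have hppos : ∀ r : ℕ, (0:ℕ) < p ^ r := fun r => pow_pos hp.pos r
  have hune : ∀ r, u r ≠ 0 := fun r => div_ne_zero (hfne _ (hppos _)) (hfne _ (hppos _))
  have hfp : ∀ e : ℕ, f (p ^ e) = ∏ r ∈ Finset.range e, u r := by
    intro e
    induction e with
    | zero => simpa using hf1
    | succ e ih =>
      rw [Finset.prod_range_succ, ← ih]
      simp only [hu]
      rw [mul_comm, div_mul_cancel₀ _ (hfne _ (hppos e))]
  set N : (ℕ → ℕ) → ℕ → ℕ :=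
    fun y r => ((Finset.range (k + 1)).filter fun i => p ^ (r + 1) ∣ y i).card with hN
  have hlx := factorization_finset_lcm (Finset.range (k+1)) x (fun i _ => (hx i).ne') p
  have hlx' := factorization_finset_lcm (Finset.range (k+1)) x' (fun i _ => (hx' i).ne') p
  set R : ℕ := ((Finset.range (k+1)).sup fun i => (x i).factorization p)
    + ((Finset.range (k+1)).sup fun i => (x' i).factorization p) + 1 with hR
  have main : ∀ y : ℕ → ℕ, (∀ i, 0 < y i) →
      ((Finset.range (k + 1)).sup fun i => (y i).factorization p) < R →
      (∏ i ∈ Finset.range (k + 1), f (p ^ (y i).factorization p)) /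
        f (p ^ ((Finset.range (k + 1)).sup fun i => (y i).factorization p)) =
      ∏ r ∈ Finset.range R, u r ^ (N y r - min (N y r) 1) := by
    intro y hy hER
    set Ey := (Finset.range (k + 1)).sup fun i => (y i).factorization p with hEy
    have hcard : ∀ r, N y r
        = ((Finset.range (k + 1)).filter fun i => r < (y i).factorization p).card := by
      intro r
      simp only [hN]
      congr 1
      apply Finset.filter_congr
      intro i _
      rw [hp.pow_dvd_iff_le_factorization (hy i).ne']
      omega
    have hnum : (∏ i ∈ Finset.range (k + 1), f (p ^ (y i).factorization p))
        = ∏ r ∈ Finset.range R, u r ^ N y r := by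
      have h1 : ∀ i ∈ Finset.range (k + 1),
          f (p ^ (y i).factorization p)
            = ∏ r ∈ Finset.range R, if r < (y i).factorization p then u r else 1 := by
        intro i hi
        have hle : (y i).factorization p < R :=
          lt_of_le_of_lt (Finset.le_sup (f := fun i => (y i).factorization p) hi) hER
        rw [hfp, show Finset.range ((y i).factorization p)
            = (Finset.range R).filter (fun r => r < (y i).factorization p) from by
          ext r; simp only [Finset.mem_filter, Finset.mem_range]; omega,
          Finset.prod_filter]
      rw [Finset.prod_congr rfl h1, Finset.prod_comm]
      apply Finset.prod_congr rfl
      intro r _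
      rw [Finset.prod_ite, Finset.prod_const, Finset.prod_const, one_pow, mul_one, hcard r]
    have hden : f (p ^ Ey) = ∏ r ∈ Finset.range R, u r ^ min (N y r) 1 := by
      rw [hfp, show Finset.range Ey = (Finset.range R).filter (fun r => r < Ey) from by
        ext r; simp only [Finset.mem_filter, Finset.mem_range]; omega,
        Finset.prod_filter]
      apply Finset.prod_congr rfl
      intro r _
      rcases lt_or_ge r Ey with h | h
      · have hpos : 0 < N y r := by
          rw [hcard]
          apply Finset.card_pos.mpr
          rw [hEy, Finset.lt_sup_iff] at h
          obtain ⟨i, hi, hri⟩ := h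
          exact ⟨i, Finset.mem_filter.mpr ⟨hi, hri⟩⟩
        rw [if_pos h, min_eq_right hpos, pow_one]
      · have hzero : N y r = 0 := by
          rw [hcard, Finset.card_eq_zero, Finset.filter_eq_empty_iff]
          intro i hi hri
          exact absurd (lt_of_lt_of_le (lt_of_lt_of_le hri (Finset.le_sup (f := fun i => (y i).factorization p) hi)) h) (lt_irrefl r)
        rw [if_neg (not_lt.mpr h), hzero]
        simp
    rw [hnum, hden, ← Finset.prod_div_distrib]
    apply Finset.prod_congr rfl
    intro r _
    exact (pow_sub₀ _ (hune r) (min_le_left _ _)).symm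
  rw [hlx, hlx', main x hx (by omega), main x' hx' (by omega)]
  apply Finset.prod_congr rfl
  intro r _
  suffices hNr : N x' r - min (N x' r) 1 = N x r - min (N x r) 1 by rw [hNr]
  by_cases hq : p ^ (r + 1) ∣ a * T
  · have heq : N x' r = N x r := by
      have hfil : ((Finset.range (k + 1)).filter fun i => p ^ (r + 1) ∣ x' i)
          = (Finset.range (k + 1)).filter fun i => p ^ (r + 1) ∣ x i := by
        apply Finset.filter_congr
        intro i _
        rw [hdiff]
        constructor
        · intro h
          have h2 := Nat.dvd_sub h hq
          simpa using h2
        · intro h; exact dvd_add h hq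
      simp only [hN, hfil]
    rw [heq]
  · have hb : ∀ y : ℕ → ℕ, (∀ i j : ℕ, i < j → j ≤ k → y j = y i + a * c * (j - i)) →
        N y r ≤ 1 := by
      intro y hsy
      simp only [hN]
      apply Finset.card_le_one.mpr
      intro i hi j hj
      simp only [Finset.mem_filter, Finset.mem_range] at hi hj
      obtain ⟨hi1, hi2⟩ := hi
      obtain ⟨hj1, hj2⟩ := hj
      by_contra hne
      have key : ∀ i j : ℕ, i < j → j ≤ k → p ^ (r+1) ∣ y i → p ^ (r+1) ∣ y j → False := by
        intro i j hij hjk h1 h2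
        have hd : p ^ (r+1) ∣ a * c * (j - i) := by
          have h3 := Nat.dvd_sub h2 h1
          rwa [hsy i j hij hjk, Nat.add_sub_cancel_left] at h3
        exact hq (hd.trans (hT (j - i) (by omega) (by omega)))
      rcases Nat.lt_trichotomy i j with h | h | h
      · exact key i j h (by omega) hi2 hj2
      · exact hne h
      · exact key j i h (by omega) hj2 hi2
    have h1 := hb x hsub
    have h2 := hb x' hsub'
    omega

theorem gkf_periodic_cLk (k a b c : ℕ) (hk : 1 ≤ k) (ha : 1 ≤ a) (hc : 1 ≤ c)
    (f : ℕ → ℚ) (hf1 : f 1 = 1)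
    (hfmul : ∀ m n : ℕ, 0 < m → 0 < n → Nat.Coprime m n → f (m * n) = f m * f n)
    (hfne : ∀ m : ℕ, 0 < m → f m ≠ 0)
    (g : ℕ → ℚ)
    (hg : ∀ n : ℕ, g n =
      (∏ i ∈ Finset.range (k + 1), f (b + a * (n + i * c))) /
        f ((Finset.range (k + 1)).lcm fun i => b + a * (n + i * c))) :
    ∀ n : ℕ, 0 < n → g (n + c * Lk k) = g n := by
  intro n hn
  have hfmul' : ∀ m n' : ℕ, Nat.Coprime m n' → f (m * n') = f m * f n' := by
    intro m n' hco
    rcases Nat.eq_zero_or_pos m with hm | hm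
    · subst hm
      have h1 : n' = 1 := by simpa [Nat.coprime_zero_left] using hco
      subst h1; simp [hf1]
    rcases Nat.eq_zero_or_pos n' with hn' | hn'
    · subst hn'
      have h1 : m = 1 := by simpa [Nat.coprime_zero_right] using hco
      subst h1; simp [hf1]
    exact hfmul _ _ hm hn' hco
  set T := c * Lk k with hTdef
  have hTfact : ∀ d : ℕ, 1 ≤ d → d ≤ k → a * c * d ∣ a * T := by
    intro d h1 h2
    have hd : d ∣ Lk k := by
      have := Finset.dvd_lcm (f := id) (s := Finset.Icc 1 k)
        (show d ∈ Finset.Icc 1 k from by simp [Finset.mem_Icc]; omega)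
      exact this
    have h3 := mul_dvd_mul_left (a * c) hd
    rwa [show a * c * Lk k = a * T from by rw [hTdef]; ring] at h3
  have hxpos : ∀ m i : ℕ, 0 < m → 0 < b + a * (m + i * c) := by
    intro m i hm
    have h1 : 0 < a * (m + i * c) := Nat.mul_pos ha (by omega)
    omega
  set P : ℕ := (∏ i ∈ Finset.range (k + 1), (b + a * (n + i * c))) *
      ∏ i ∈ Finset.range (k + 1), (b + a * (n + T + i * c)) with hPdef
  have hP : P ≠ 0 := by
    rw [hPdef]
    apply Nat.mul_ne_zero <;>
      (rw [Finset.prod_ne_zero_iff]; intro i _; exact (hxpos _ i (by omega)).ne')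
  have hdvd1 : ∀ i ∈ Finset.range (k + 1), (b + a * (n + i * c)) ∣ P := by
    intro i hi
    exact dvd_mul_of_dvd_left (Finset.dvd_prod_of_mem _ hi) _
  have hdvd2 : ∀ i ∈ Finset.range (k + 1), (b + a * (n + T + i * c)) ∣ P := by
    intro i hi
    exact dvd_mul_of_dvd_right (Finset.dvd_prod_of_mem _ hi) _
  have hfacto : ∀ y : ℕ, y ≠ 0 → y ∣ P → f y = ∏ p ∈ P.primeFactors, f (p ^ y.factorization p) := by
    intro y hy hyP
    rw [Nat.multiplicative_factorization f hfmul' hf1 hy]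
    simp only [Finsupp.prod]
    rw [Nat.support_factorization]
    apply Finset.prod_subset (Nat.primeFactors_mono hyP hP)
    intro q _ hqy
    rw [← Nat.support_factorization, Finsupp.notMem_support_iff] at hqy
    rw [hqy, pow_zero, hf1]
  have hrep : ∀ m : ℕ, 0 < m → (∀ i ∈ Finset.range (k + 1), (b + a * (m + i * c)) ∣ P) →
      g m = ∏ p ∈ P.primeFactors,
        ((∏ i ∈ Finset.range (k + 1), f (p ^ (b + a * (m + i * c)).factorization p)) /
          f (p ^ (((Finset.range (k + 1)).lcm fun i => b + a * (m + i * c)).factorization p))) := by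
    intro m hm hdvd
    have hlcm_dvd : ((Finset.range (k + 1)).lcm fun i => b + a * (m + i * c)) ∣ P :=
      Finset.lcm_dvd hdvd
    have hlcm_ne : ((Finset.range (k + 1)).lcm fun i => b + a * (m + i * c)) ≠ 0 :=
      lcm_ne_zero'' _ _ fun i _ => (hxpos m i hm).ne'
    have h1 : ∀ i ∈ Finset.range (k + 1), f (b + a * (m + i * c))
        = ∏ p ∈ P.primeFactors, f (p ^ (b + a * (m + i * c)).factorization p) :=
      fun i hi => hfacto _ (hxpos m i hm).ne' (hdvd i hi)
    rw [hg m, Finset.prod_div_distrib]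
    congr 1
    · rw [Finset.prod_congr rfl h1, Finset.prod_comm]
    · exact hfacto _ hlcm_ne hlcm_dvd
  rw [hrep n hn hdvd1, hrep (n + T) (by omega) hdvd2]
  apply Finset.prod_congr rfl
  intro p hpS
  have hp : p.Prime := Nat.prime_of_mem_primeFactors hpS
  exact key_prime k a c T hTfact f hf1 hfne p hp
    (fun i => b + a * (n + i * c)) (fun i => b + a * (n + T + i * c))
    (fun i => hxpos n i hn) (fun i => hxpos (n + T) i (by omega))
    (fun i => by ring)
    (fun i j hij hjk => by
      obtain ⟨d, rfl⟩ := Nat.exists_eq_add_of_lt hij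
      rw [show i + d + 1 - i = d + 1 from by omega]
      ring)
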